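/- Let Λ = ℤ^d, p ∈ (0,∞], ω₁, ω₂ be weights on Λ and ω₀ a weight on Λ×Λ with ω₂(j)/ω₁(k) ≤ ω₀(j,k) for all j,k ∈ Λ. Let p' = ∞ when p ≤ 1, p' = p/(p−1) when 1 < p < ∞, and p' = 1 when p = ∞. If A ∈ U^p(ω₀,Λ), then A extends uniquely to a continuous map from ℓ^{p'}_{(ω₁)}(Λ) to ℓ^p_{(ω₂)}(Λ) with operator quasi-norm at most ‖A‖_{U^p(ω₀,Λ)}. -/

import Mathlib

open MeasureTheory
open scoped ENNReal NNReal

private lemma coe_nnnorm_tsum_le {ι E : Type*} [NormedAddCommGroup E] [CompleteSpace E]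
    (g : ι → E) : (‖∑' i, g i‖₊ : ℝ≥0∞) ≤ ∑' i, (‖g i‖₊ : ℝ≥0∞) := by
  by_cases h : Summable fun i => ‖g i‖₊
  · rw [← ENNReal.coe_tsum h]
    exact_mod_cast nnnorm_tsum_le h
  · have : (∑' i, (‖g i‖₊ : ℝ≥0∞)) = ⊤ := by
      by_contra htop
      exact h (ENNReal.tsum_coe_ne_top_iff_summable.1 htop)
    simp [this]

private lemma tsum_rpow_le {ι : Type*} (x : ι → ℝ≥0∞) {q : ℝ} (hq0 : 0 < q) (hq1 : q ≤ 1) :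
    (∑' i, x i) ^ q ≤ ∑' i, x i ^ q := by
  have hfin : ∀ s : Finset ι, (∑ i ∈ s, x i) ^ q ≤ ∑ i ∈ s, x i ^ q := by
    intro s
    induction s using Finset.cons_induction with
    | empty => simp [ENNReal.zero_rpow_of_pos hq0]
    | cons i s hi ih =>
      rw [Finset.sum_cons, Finset.sum_cons]
      exact le_trans (ENNReal.rpow_add_le_add_rpow _ _ hq0.le hq1) (by gcongr)
  have h1 : (∑' i, x i) ≤ (∑' i, x i ^ q) ^ (1/q) := by
    rw [ENNReal.tsum_eq_iSup_sum]
    refine iSup_le fun s => ?_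
    calc ∑ i ∈ s, x i = ((∑ i ∈ s, x i) ^ q) ^ (1/q) := by
          rw [← ENNReal.rpow_mul, mul_one_div_cancel hq0.ne', ENNReal.rpow_one]
      _ ≤ (∑ i ∈ s, x i ^ q) ^ (1/q) := ENNReal.rpow_le_rpow (hfin s) (by positivity)
      _ ≤ (∑' i, x i ^ q) ^ (1/q) := ENNReal.rpow_le_rpow (ENNReal.sum_le_tsum s) (by positivity)
  calc (∑' i, x i) ^ q ≤ ((∑' i, x i ^ q) ^ (1/q)) ^ q := ENNReal.rpow_le_rpow h1 hq0.le
    _ = ∑' i, x i ^ q := by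
        rw [← ENNReal.rpow_mul, one_div_mul_cancel hq0.ne', ENNReal.rpow_one]

/-- if `A ∈ U^p(ω₀, ℤ^d)` and `ω₂(j)/ω₁(k) ≤ ω₀(j,k)`, then `A` is
bounded from `ℓ^{p'}_{(ω₁)}` to `ℓ^p_{(ω₂)}` with operator quasi-norm at most
`‖A‖_{U^p(ω₀)}`, where `p'` is the extended conjugate exponent (`p' = ∞` for `p ≤ 1`).
The `U^p` quasi-norm is the `ℓ^p` norm of `a·ω₀` over `ℤ^d × ℤ^d`, realized via
`eLpNorm` w.r.t. counting measure (so that `p = ∞` is included). -/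
theorem stmt5 (d : ℕ) (p p' : ℝ≥0∞) (hp : 0 < p)
    (hp'1 : p ≤ 1 → p' = ∞)
    (hp'2 : 1 < p → p ≠ ∞ → 1 / p + 1 / p' = 1)
    (hp'3 : p = ∞ → p' = 1)
    (ω₁ ω₂ : (Fin d → ℤ) → ℝ) (ω₀ : (Fin d → ℤ) → (Fin d → ℤ) → ℝ)
    (hω₁ : ∀ j, 0 < ω₁ j) (hω₂ : ∀ j, 0 < ω₂ j) (hω₀ : ∀ j k, 0 < ω₀ j k)
    (hw : ∀ j k, ω₂ j / ω₁ k ≤ ω₀ j k)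
    (a : (Fin d → ℤ) → (Fin d → ℤ) → ℂ)
    (hA : eLpNorm (fun jk : (Fin d → ℤ) × (Fin d → ℤ) =>
      a jk.1 jk.2 * (ω₀ jk.1 jk.2 : ℂ)) p Measure.count < ∞)
    (f : (Fin d → ℤ) → ℂ)
    (hf : MemLp (fun k => f k * (ω₁ k : ℂ)) p' Measure.count) :
    eLpNorm (fun j => (∑' k, a j k * f k) * (ω₂ j : ℂ)) p Measure.count ≤
      eLpNorm (fun jk : (Fin d → ℤ) × (Fin d → ℤ) =>
        a jk.1 jk.2 * (ω₀ jk.1 jk.2 : ℂ)) p Measure.count *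
      eLpNorm (fun k => f k * (ω₁ k : ℂ)) p' Measure.count := by
  classical
  set G : (Fin d → ℤ) → (Fin d → ℤ) → ℝ≥0∞ :=
    fun j k => (‖a j k * (ω₀ j k : ℂ)‖₊ : ℝ≥0∞) with hG
  set H : (Fin d → ℤ) → ℝ≥0∞ := fun k => (‖f k * (ω₁ k : ℂ)‖₊ : ℝ≥0∞) with hH
  -- key weight inequality
  have hkey : ∀ j k, (‖(ω₂ j : ℂ)‖₊ : ℝ≥0∞) ≤ ‖(ω₀ j k : ℂ)‖₊ * ‖(ω₁ k : ℂ)‖₊ := by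
    intro j k
    have h1 : ω₂ j ≤ ω₀ j k * ω₁ k := (div_le_iff₀ (hω₁ k)).1 (hw j k)
    have h2 : ‖(ω₂ j : ℂ)‖ ≤ ‖(ω₀ j k : ℂ)‖ * ‖(ω₁ k : ℂ)‖ := by
      simp only [Complex.norm_real, Real.norm_eq_abs]
      calc |ω₂ j| = ω₂ j := abs_of_pos (hω₂ j)
        _ ≤ ω₀ j k * ω₁ k := h1
        _ ≤ |ω₀ j k| * |ω₁ k| :=
            mul_le_mul (le_abs_self _) (le_abs_self _) (hω₁ k).le (abs_nonneg _)
    have h3 : (‖(ω₂ j : ℂ)‖₊ : ℝ≥0) ≤ ‖(ω₀ j k : ℂ)‖₊ * ‖(ω₁ k : ℂ)‖₊ := by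
      rw [← nnnorm_mul]
      exact_mod_cast (by simpa [norm_mul] using h2 :
        ‖(ω₂ j : ℂ)‖ ≤ ‖(ω₀ j k : ℂ) * (ω₁ k : ℂ)‖)
    exact_mod_cast h3
  -- pointwise bound
  have hpt : ∀ j, (‖(∑' k, a j k * f k) * (ω₂ j : ℂ)‖₊ : ℝ≥0∞) ≤ ∑' k, G j k * H k := by
    intro j
    calc (‖(∑' k, a j k * f k) * (ω₂ j : ℂ)‖₊ : ℝ≥0∞)
        = (‖∑' k, a j k * f k‖₊ : ℝ≥0∞) * ‖(ω₂ j : ℂ)‖₊ := by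
          rw [nnnorm_mul]; push_cast; ring
      _ ≤ (∑' k, (‖a j k * f k‖₊ : ℝ≥0∞)) * ‖(ω₂ j : ℂ)‖₊ := by
          gcongr; exact coe_nnnorm_tsum_le _
      _ = ∑' k, (‖a j k * f k‖₊ : ℝ≥0∞) * ‖(ω₂ j : ℂ)‖₊ := ENNReal.tsum_mul_right.symm
      _ ≤ ∑' k, G j k * H k := by
          refine ENNReal.tsum_le_tsum fun k => ?_
          calc (‖a j k * f k‖₊ : ℝ≥0∞) * ‖(ω₂ j : ℂ)‖₊
              ≤ ((‖a j k‖₊ : ℝ≥0∞) * ‖f k‖₊) * ((‖(ω₀ j k : ℂ)‖₊ : ℝ≥0∞) * ‖(ω₁ k : ℂ)‖₊) := by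
                rw [nnnorm_mul]; push_cast; gcongr; exact hkey j k
            _ = G j k * H k := by
                simp only [hG, hH, nnnorm_mul]; push_cast; ring
  have hmeas : ∀ {β : Type} [MeasurableSpace β] [Countable β] [MeasurableSingletonClass β]
      (g : β → ℝ≥0∞), Measurable g := fun g => measurable_of_countable g
  rcases eq_or_ne p ∞ with hptop | hpfin
  · -- p = ∞, p' = 1
    subst hptop
    rw [hp'3 rfl]
    rw [eLpNorm_exponent_top, eLpNormEssSup_count, eLpNorm_exponent_top, eLpNormEssSup_count,
      eLpNorm_one_eq_lintegral_enorm, lintegral_count]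
    refine iSup_le fun j => (hpt j).trans ?_
    calc ∑' k, G j k * H k
        ≤ ∑' k, (⨆ jk : (Fin d → ℤ) × (Fin d → ℤ),
            (‖a jk.1 jk.2 * (ω₀ jk.1 jk.2 : ℂ)‖₊ : ℝ≥0∞)) * H k := by
          refine ENNReal.tsum_le_tsum fun k => ?_
          gcongr
          exact le_iSup (fun jk : (Fin d → ℤ) × (Fin d → ℤ) =>
            (‖a jk.1 jk.2 * (ω₀ jk.1 jk.2 : ℂ)‖₊ : ℝ≥0∞)) (j, k)
      _ = _ := ENNReal.tsum_mul_left
  · -- p finite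
    rw [eLpNorm_eq_lintegral_rpow_enorm_toReal hp.ne' hpfin, lintegral_count,
      eLpNorm_eq_lintegral_rpow_enorm_toReal hp.ne' hpfin, lintegral_count]
    set q := p.toReal with hqdef
    have hq0 : 0 < q := ENNReal.toReal_pos hp.ne' hpfin
    set C := eLpNorm (fun k => f k * (ω₁ k : ℂ)) p' Measure.count with hC
    have main : ∀ j, (∑' k, G j k * H k) ^ q ≤ (∑' k, G j k ^ q) * C ^ q := by
      rcases le_or_gt p 1 with hp1 | hp1
      · -- p ≤ 1, p' = ∞
        have hq1 : q ≤ 1 := by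
          rw [hqdef]
          calc p.toReal ≤ (1 : ℝ≥0∞).toReal := ENNReal.toReal_mono ENNReal.one_ne_top hp1
            _ = 1 := by simp
        have hCsup : C = ⨆ k, H k := by
          rw [hC, hp'1 hp1, eLpNorm_exponent_top, eLpNormEssSup_count]; rfl
        intro j
        calc (∑' k, G j k * H k) ^ q
            ≤ ((∑' k, G j k) * C) ^ q := by
              rw [← ENNReal.tsum_mul_right]
              gcongr with k
              rw [hCsup]
              exact le_iSup H k
          _ = (∑' k, G j k) ^ q * C ^ q := ENNReal.mul_rpow_of_nonneg _ _ hq0.le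
          _ ≤ (∑' k, G j k ^ q) * C ^ q := by
              gcongr
              exact tsum_rpow_le _ hq0 hq1
      · -- 1 < p < ∞
        have hp'ne0 : p' ≠ 0 := by
          intro h
          have := hp'2 hp1 hpfin
          rw [h] at this
          simp at this
        have hp'fin : p' ≠ ∞ := by
          intro h
          have h2 := hp'2 hp1 hpfin
          rw [h] at h2
          simp only [ENNReal.div_top, add_zero] at h2
          have : p = 1 := by
            rwa [ENNReal.div_eq_one_iff hp.ne' hpfin, eq_comm] at h2
          exact absurd this hp1.ne'
        set q' := p'.toReal with hq'def
        have hconj : q.HolderConjugate q' := by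
          refine Real.holderConjugate_iff.2 ⟨?_, ?_⟩
          · calc (1:ℝ) = (1 : ℝ≥0∞).toReal := by simp
              _ < p.toReal := ENNReal.toReal_strict_mono hpfin hp1
          · have h2 := hp'2 hp1 hpfin
            have h3 := congrArg ENNReal.toReal h2
            rw [ENNReal.toReal_add (by simp [hp.ne']) (by simp [hp'ne0]),
              ENNReal.toReal_div, ENNReal.toReal_div, ENNReal.toReal_one] at h3
            simpa [one_div] using h3
        have hCeq : C = (∑' k, H k ^ q') ^ (1 / q') := by
          rw [hC, eLpNorm_eq_lintegral_rpow_enorm_toReal hp'ne0 hp'fin, lintegral_count]; rfl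
        intro j
        have holder : (∑' k, G j k * H k) ≤ (∑' k, G j k ^ q) ^ (1/q) * C := by
          rw [hCeq, ← lintegral_count (fun k => G j k ^ q), ← lintegral_count (fun k => H k ^ q'),
            ← lintegral_count (fun k => G j k * H k)]
          exact ENNReal.lintegral_mul_le_Lp_mul_Lq Measure.count hconj
            (hmeas _).aemeasurable (hmeas _).aemeasurable
        calc (∑' k, G j k * H k) ^ q
            ≤ ((∑' k, G j k ^ q) ^ (1/q) * C) ^ q := by gcongr
          _ = ((∑' k, G j k ^ q) ^ (1/q)) ^ q * C ^ q := ENNReal.mul_rpow_of_nonneg _ _ hq0.le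
          _ = (∑' k, G j k ^ q) * C ^ q := by
              rw [← ENNReal.rpow_mul, one_div_mul_cancel hq0.ne', ENNReal.rpow_one]
    -- assemble
    calc (∑' j, (‖(∑' k, a j k * f k) * (ω₂ j : ℂ)‖₊ : ℝ≥0∞) ^ q) ^ (1/q)
        ≤ (∑' j, (∑' k, G j k * H k) ^ q) ^ (1/q) := by
          gcongr with j
          exact hpt j
      _ ≤ (∑' j, (∑' k, G j k ^ q) * C ^ q) ^ (1/q) := by
          gcongr with j
          exact main j
      _ = ((∑' j, ∑' k, G j k ^ q) * C ^ q) ^ (1/q) := by rw [ENNReal.tsum_mul_right]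
      _ = (∑' j, ∑' k, G j k ^ q) ^ (1/q) * (C ^ q) ^ (1/q) :=
          ENNReal.mul_rpow_of_nonneg _ _ (by positivity)
      _ = (∑' jk : (Fin d → ℤ) × (Fin d → ℤ),
            (‖a jk.1 jk.2 * (ω₀ jk.1 jk.2 : ℂ)‖₊ : ℝ≥0∞) ^ q) ^ (1/q) * C := by
          rw [← ENNReal.tsum_prod' (f := fun jk => G jk.1 jk.2 ^ q),
            ← ENNReal.rpow_mul, mul_one_div_cancel hq0.ne', ENNReal.rpow_one]
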